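/- Let 0 < u_1 < ... < u_m be real numbers, g_i(ξ) := e^{u_i ξ} − 1 for i = 1,...,m, and g_{m+1}(ξ) := (|ξ| ∨ 1) e^{(u_m ∨ 1)|ξ|}. For y ≥ 0, there exists a non-negative measure K(dξ) on [−y,∞) satisfying ∫ g_i(ξ) K(dξ) = p^i for i=1,...,m and ∫ g_{m+1}(ξ) K(dξ) = p^{m+1} if and only if (p^1,...,p^{m+1}) lies in the closed conic hull of the set {(g_1(ξ),...,g_{m+1}(ξ)) : ξ ∈ [−y,∞)} ⊂ R^{m+1}. -/

import Mathlib

open MeasureTheory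

namespace Stmt12

/-- The test functions of the generalized moment problem:
`g_i(ξ) = e^{u_i ξ} − 1` for `i < m` and
`g_{m+1}(ξ) = (|ξ| ∨ 1) e^{(u_m ∨ 1)|ξ|}` (here `um = u_m`). -/
noncomputable def g (m : ℕ) (u : Fin m → ℝ) (um : ℝ)
    (i : Fin (m + 1)) (ξ : ℝ) : ℝ :=
  if h : (i : ℕ) < m then Real.exp (u ⟨i, h⟩ * ξ) - 1
  else (max |ξ| 1) * Real.exp (max um 1 * |ξ|)

/-! ### Auxiliary general lemmas -/

/-- Padding a sum over `Fin c` to a sum over `Fin N`. -/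
lemma sum_pad {M : Type*} [AddCommMonoid M] {c N : ℕ} (hcN : c ≤ N) (G : Fin c → M) :
    ∑ j : Fin N, (if h : (j : ℕ) < c then G ⟨j, h⟩ else 0) = ∑ j : Fin c, G j := by
  have h1 : ∑ j : Fin N, (if h : (j : ℕ) < c then G ⟨j, h⟩ else 0)
      = ∑ j ∈ Finset.range N, (if h : j < c then G ⟨j, h⟩ else 0) :=
    Fin.sum_univ_eq_sum_range (fun j => if h : j < c then G ⟨j, h⟩ else 0) N
  have h2 : ∑ j : Fin c, G j
      = ∑ j ∈ Finset.range c, (if h : j < c then G ⟨j, h⟩ else 0) := by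
    rw [← Fin.sum_univ_eq_sum_range (fun j => if h : j < c then G ⟨j, h⟩ else 0) c]
    exact Finset.sum_congr rfl fun j _ => by rw [dif_pos j.isLt]
  rw [h1, h2]
  exact (Finset.sum_subset (Finset.range_subset_range.2 hcN)
    (fun j _ hj => dif_neg (by simpa using hj))).symm

/-- The convex hull of a nonempty compact subset of `ℝ^n` is compact. -/
lemma isCompact_convexHull_fin {n : ℕ} {D : Set (Fin n → ℝ)} (hne : D.Nonempty)
    (hD : IsCompact D) : IsCompact (convexHull ℝ D) := by
  classical
  obtain ⟨d₀, hd₀⟩ := hne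
  set N := n + 2 with hN
  set φ : (Fin N → ℝ) × (Fin N → Fin n → ℝ) → (Fin n → ℝ) :=
    fun q => ∑ j : Fin N, q.1 j • q.2 j with hφ
  have hφc : Continuous φ := by
    apply continuous_finset_sum
    intro j _
    exact ((continuous_apply j).comp continuous_fst).smul
      ((continuous_apply j).comp continuous_snd)
  have hW : IsCompact (stdSimplex ℝ (Fin N)) := isCompact_stdSimplex _ _
  have hZ : IsCompact (Set.univ.pi fun _ : Fin N => D) := isCompact_univ_pi fun _ => hD
  have himg : IsCompact (φ '' (stdSimplex ℝ (Fin N) ×ˢ Set.univ.pi fun _ : Fin N => D)) :=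
    (hW.prod hZ).image hφc
  have heq : convexHull ℝ D = φ '' (stdSimplex ℝ (Fin N) ×ˢ Set.univ.pi fun _ : Fin N => D) := by
    apply Set.Subset.antisymm
    · intro x hx
      rw [convexHull_eq_union] at hx
      simp only [Set.mem_iUnion] at hx
      obtain ⟨t, hts, hai, hxt⟩ := hx
      have hcard : t.card ≤ N := by
        have h1 : Fintype.card t ≤ Module.finrank ℝ
            (vectorSpan ℝ (Set.range (Subtype.val : t → (Fin n → ℝ)))) + 1 :=
          hai.card_le_finrank_succ
        have h2 : Module.finrank ℝ
            (vectorSpan ℝ (Set.range (Subtype.val : t → (Fin n → ℝ)))) ≤ n := by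
          have := Submodule.finrank_le (vectorSpan ℝ (Set.range (Subtype.val : t → (Fin n → ℝ))))
          simpa using this
        have h3 : Fintype.card t = t.card := Fintype.card_coe t
        omega
      rw [Finset.mem_convexHull'] at hxt
      obtain ⟨w, hw0, hw1, hwx⟩ := hxt
      set c := t.card with hc
      set e : Fin c → (Fin n → ℝ) := fun j => (t.equivFin.symm j : (Fin n → ℝ)) with he
      have hsum_e : ∀ (M : Type) (_ : AddCommMonoid M) (F : (Fin n → ℝ) → M),
          ∑ y ∈ t, F y = ∑ j : Fin c, F (e j) := by
        intro M _ F
        rw [← Finset.sum_coe_sort t F]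
        exact (Equiv.sum_comp t.equivFin.symm (fun a => F (a : (Fin n → ℝ)))).symm
      set w' : Fin N → ℝ := fun j => if h : (j : ℕ) < c then w (e ⟨j, h⟩) else 0 with hw'
      set z' : Fin N → (Fin n → ℝ) := fun j => if h : (j : ℕ) < c then e ⟨j, h⟩ else d₀ with hz'
      refine ⟨⟨w', z'⟩, ⟨⟨?_, ?_⟩, ?_⟩, ?_⟩
      · intro j
        simp only [hw']
        split
        · exact hw0 _ (by simp [he, Finset.coe_mem])
        · exact le_rfl
      · rw [hw', sum_pad hcard (fun j => w (e j))]
        rw [hsum_e ℝ inferInstance w] at hw1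
        exact hw1
      · intro j _
        simp only [hz']
        split
        · exact hts (by simp [he, Finset.coe_mem])
        · exact hd₀
      · have : ∀ j : Fin N, w' j • z' j
            = (if h : (j : ℕ) < c then w (e ⟨j, h⟩) • e ⟨j, h⟩ else 0) := by
          intro j
          by_cases h : (j : ℕ) < c
          · simp [hw', hz', h]
          · simp [hw', hz', h]
        rw [hφ]
        simp only [this]
        rw [sum_pad hcard (fun j => w (e j) • e j)]
        rw [hsum_e (Fin n → ℝ) inferInstance (fun y => w y • y)] at hwx
        exact hwx
    · rintro x ⟨⟨wq, zq⟩, ⟨⟨hw0, hw1⟩, hz⟩, rfl⟩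
      exact mem_convexHull_of_exists_fintype wq zq hw0 hw1
        (fun j => hz j (Set.mem_univ j)) rfl
  rw [heq]; exact himg

end Stmt12

namespace Stmt12

section Main

variable {m : ℕ} (u : Fin m → ℝ) (um : ℝ) (y : ℝ)

/-- The vector of test functions. -/
noncomputable def G (ξ : ℝ) : Fin (m + 1) → ℝ := fun i => g m u um i ξ

/-- The dominating function (the last test function). -/
noncomputable def gl (ξ : ℝ) : ℝ := (max |ξ| 1) * Real.exp (max um 1 * |ξ|)

variable {u um y}

lemma one_le_gl (ξ : ℝ) : 1 ≤ gl um ξ := by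
  have h1 : (1:ℝ) ≤ max |ξ| 1 := le_max_right _ _
  have h2 : (1:ℝ) ≤ Real.exp (max um 1 * |ξ|) := by
    rw [Real.one_le_exp_iff]
    positivity
  rw [gl]; nlinarith

lemma gl_pos (ξ : ℝ) : 0 < gl um ξ := lt_of_lt_of_le one_pos (one_le_gl ξ)

lemma g_of_lt {i : Fin (m + 1)} (h : (i : ℕ) < m) (ξ : ℝ) :
    g m u um i ξ = Real.exp (u ⟨i, h⟩ * ξ) - 1 := dif_pos h

lemma g_of_ge {i : Fin (m + 1)} (h : ¬ (i : ℕ) < m) (ξ : ℝ) :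
    g m u um i ξ = gl um ξ := dif_neg h

lemma G_last (ξ : ℝ) : G u um ξ (Fin.last m) = gl um ξ :=
  g_of_ge (by simp) ξ

/-- The fundamental domination bound `|g_i| ≤ g_{m+1}`. -/
lemma abs_g_le (hupos : ∀ i, 0 < u i) (hub : ∀ i, u i ≤ um)
    (i : Fin (m + 1)) (ξ : ℝ) : |g m u um i ξ| ≤ gl um ξ := by
  by_cases h : (i : ℕ) < m
  · rw [g_of_lt h]
    set a := u ⟨i, h⟩ with ha
    have hapos : 0 < a := hupos _
    have haub : a ≤ max um 1 := le_trans (hub _) (le_max_left _ _)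
    have hexp : Real.exp (a * ξ) ≤ Real.exp (max um 1 * |ξ|) := by
      apply Real.exp_le_exp.2
      rcases le_or_gt 0 ξ with hξ | hξ
      · rw [abs_of_nonneg hξ]; exact mul_le_mul_of_nonneg_right haub hξ
      · have : a * ξ < 0 := mul_neg_of_pos_of_neg hapos hξ
        have : (0:ℝ) ≤ max um 1 * |ξ| := by positivity
        linarith
    have hexp' : Real.exp (max um 1 * |ξ|) ≤ gl um ξ := by
      have h1 : (1:ℝ) ≤ max |ξ| 1 := le_max_right _ _
      have h2 : (0:ℝ) < Real.exp (max um 1 * |ξ|) := Real.exp_pos _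
      calc Real.exp (max um 1 * |ξ|) = 1 * Real.exp (max um 1 * |ξ|) := (one_mul _).symm
        _ ≤ gl um ξ := mul_le_mul_of_nonneg_right h1 h2.le
    rw [abs_sub_le_iff]
    constructor
    · have : Real.exp (a * ξ) - 1 ≤ Real.exp (a * ξ) := by linarith
      linarith [le_trans this (le_trans hexp hexp')]
    · have : 1 - Real.exp (a * ξ) ≤ 1 := by linarith [Real.exp_pos (a * ξ)]
      linarith [one_le_gl (um := um) ξ]
  · rw [g_of_ge h]
    rw [abs_of_pos (gl_pos ξ)]

/-- The conic-combinations set from the statement. -/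
def Cset : Set (Fin (m + 1) → ℝ) :=
  {x : Fin (m + 1) → ℝ |
    ∃ (k : ℕ) (c : Fin k → ℝ) (ξ : Fin k → ℝ),
      (∀ j, 0 ≤ c j) ∧ (∀ j, -y ≤ ξ j) ∧
      x = ∑ j : Fin k, c j • fun i => g m u um i (ξ j)}

variable (u um y)

lemma zero_mem_Cset : (0 : Fin (m + 1) → ℝ) ∈ Cset (u := u) (um := um) (y := y) :=
  ⟨0, Fin.elim0, Fin.elim0, (fun j => j.elim0), (fun j => j.elim0), by simp⟩

lemma G_mem_Cset {ξ₀ : ℝ} (hξ₀ : -y ≤ ξ₀) : G u um ξ₀ ∈ Cset (u := u) (um := um) (y := y) := by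
  refine ⟨1, fun _ => 1, fun _ => ξ₀, fun _ => zero_le_one, fun _ => hξ₀, ?_⟩
  funext i
  simp [G]

lemma smul_mem_Cset {t : ℝ} (ht : 0 ≤ t) {x : Fin (m + 1) → ℝ}
    (hx : x ∈ Cset (u := u) (um := um) (y := y)) :
    t • x ∈ Cset (u := u) (um := um) (y := y) := by
  obtain ⟨k, c, ξ, hc, hξ, rfl⟩ := hx
  refine ⟨k, fun j => t * c j, ξ, fun j => mul_nonneg ht (hc j), hξ, ?_⟩
  rw [Finset.smul_sum]
  exact Finset.sum_congr rfl fun j _ => by rw [smul_smul]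

lemma add_mem_Cset {x₁ x₂ : Fin (m + 1) → ℝ}
    (h₁ : x₁ ∈ Cset (u := u) (um := um) (y := y))
    (h₂ : x₂ ∈ Cset (u := u) (um := um) (y := y)) :
    x₁ + x₂ ∈ Cset (u := u) (um := um) (y := y) := by
  obtain ⟨k₁, c₁, ξ₁, hc₁, hξ₁, rfl⟩ := h₁
  obtain ⟨k₂, c₂, ξ₂, hc₂, hξ₂, rfl⟩ := h₂
  refine ⟨k₁ + k₂, Fin.append c₁ c₂, Fin.append ξ₁ ξ₂, ?_, ?_, ?_⟩
  · intro j
    refine Fin.addCases (fun i => ?_) (fun i => ?_) j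
    · rw [Fin.append_left]; exact hc₁ i
    · rw [Fin.append_right]; exact hc₂ i
  · intro j
    refine Fin.addCases (fun i => ?_) (fun i => ?_) j
    · rw [Fin.append_left]; exact hξ₁ i
    · rw [Fin.append_right]; exact hξ₂ i
  · rw [Fin.sum_univ_add]
    congr 1
    · exact Finset.sum_congr rfl fun i _ => by rw [Fin.append_left, Fin.append_left]
    · exact Finset.sum_congr rfl fun i _ => by rw [Fin.append_right, Fin.append_right]

lemma convex_Cset : Convex ℝ (Cset (u := u) (um := um) (y := y)) := by
  intro x hx z hz a b ha hb _
  exact add_mem_Cset u um y (smul_mem_Cset u um y ha hx) (smul_mem_Cset u um y hb hz)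


/-- Normalized curve. -/
noncomputable def NN (ξ : ℝ) : Fin (m + 1) → ℝ := (gl um ξ)⁻¹ • G u um ξ

variable {u um y}

lemma continuous_G : Continuous (G u um) := by
  apply continuous_pi
  intro i
  by_cases h : (i : ℕ) < m
  · have : (fun ξ => g m u um i ξ) = fun ξ => Real.exp (u ⟨i, h⟩ * ξ) - 1 := by
      funext ξ; exact g_of_lt h ξ
    rw [show (fun ξ => G u um ξ i) = fun ξ => g m u um i ξ from rfl, this]
    fun_prop
  · have : (fun ξ => g m u um i ξ) = fun ξ => gl um ξ := by
      funext ξ; exact g_of_ge h ξ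
    rw [show (fun ξ => G u um ξ i) = fun ξ => g m u um i ξ from rfl, this]
    unfold gl
    fun_prop

lemma continuous_gl : Continuous (gl um) := by unfold gl; fun_prop

lemma continuous_NN : Continuous (NN u um) := by
  unfold NN
  exact (continuous_gl.inv₀ fun ξ => (gl_pos ξ).ne').smul continuous_G

lemma NN_last (ξ : ℝ) : NN u um ξ (Fin.last m) = 1 := by
  rw [NN]
  simp only [Pi.smul_apply, G_last, smul_eq_mul]
  exact inv_mul_cancel₀ (gl_pos ξ).ne'

lemma NN_mem_Cset {ξ₀ : ℝ} (hξ₀ : -y ≤ ξ₀) : NN u um ξ₀ ∈ Cset (u := u) (um := um) (y := y) :=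
  smul_mem_Cset u um y (inv_nonneg.2 (gl_pos ξ₀).le) (G_mem_Cset u um y hξ₀)

lemma norm_NN_le (hupos : ∀ i, 0 < u i) (hub : ∀ i, u i ≤ um) (ξ : ℝ) :
    ‖NN u um ξ‖ ≤ 1 := by
  rw [pi_norm_le_iff_of_nonneg zero_le_one]
  intro i
  rw [NN]
  simp only [Pi.smul_apply, smul_eq_mul, Real.norm_eq_abs, abs_mul,
    abs_inv, abs_of_pos (gl_pos (um := um) ξ)]
  rw [inv_mul_le_iff₀ (gl_pos ξ), mul_one]
  exact abs_g_le hupos hub i ξ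

/-- The key limit: the normalized curve converges to its value at `0` at `+∞`. -/
lemma tendsto_NN_atTop (hupos : ∀ i, 0 < u i) (hub : ∀ i, u i ≤ um) :
    Filter.Tendsto (NN u um) Filter.atTop (nhds (NN u um 0)) := by
  rw [tendsto_pi_nhds]
  intro i
  by_cases h : (i : ℕ) < m
  · have h0 : NN u um 0 i = 0 := by
      rw [NN]
      simp [g_of_lt h, G]
    rw [h0]
    apply squeeze_zero_norm' (a := fun ξ : ℝ => ξ⁻¹) _ tendsto_inv_atTop_zero
    filter_upwards [Filter.eventually_ge_atTop (1:ℝ)] with ξ hξ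
    have hξ0 : (0:ℝ) < ξ := lt_of_lt_of_le one_pos hξ
    set a := u ⟨i, h⟩ with ha
    have hapos : 0 < a := hupos _
    have hglb : ξ * Real.exp (a * ξ) ≤ gl um ξ := by
      rw [gl]
      have h1 : ξ ≤ max |ξ| 1 := le_trans (le_abs_self ξ) (le_max_left _ _)
      have h2 : Real.exp (a * ξ) ≤ Real.exp (max um 1 * |ξ|) := by
        apply Real.exp_le_exp.2
        rw [abs_of_pos hξ0]
        exact mul_le_mul_of_nonneg_right (le_trans (hub _) (le_max_left _ _)) hξ0.le
      exact mul_le_mul h1 h2 (Real.exp_pos _).le (le_trans hξ0.le h1)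
    have habs : |g m u um i ξ| ≤ Real.exp (a * ξ) := by
      rw [g_of_lt h, ← ha, abs_of_nonneg]
      · linarith [Real.exp_pos (a * ξ)]
      · have : (1:ℝ) ≤ Real.exp (a * ξ) := by
          rw [Real.one_le_exp_iff]; positivity
        linarith
    have key : |NN u um ξ i| ≤ ξ⁻¹ := by
      rw [NN]
      simp only [Pi.smul_apply, smul_eq_mul, abs_mul, abs_inv,
        abs_of_pos (gl_pos (um := um) ξ)]
      rw [inv_mul_le_iff₀ (gl_pos ξ), mul_comm, inv_mul_eq_div, le_div_iff₀ hξ0,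
        show (G u um ξ i) = g m u um i ξ from rfl]
      nlinarith [habs, hglb, abs_nonneg (g m u um i ξ), Real.exp_pos (a * ξ)]
    simpa using key
  · have hconst : ∀ ξ : ℝ, NN u um ξ i = 1 := by
      intro ξ
      rw [NN]
      simp only [Pi.smul_apply, smul_eq_mul, show (G u um ξ i) = g m u um i ξ from rfl,
        g_of_ge h]
      exact inv_mul_cancel₀ (gl_pos ξ).ne'
    rw [hconst 0]
    exact Filter.Tendsto.congr (fun ξ => (hconst ξ).symm) tendsto_const_nhds


/-- The normalized curve image. -/
def Dset' (u : Fin m → ℝ) (um y : ℝ) : Set (Fin (m + 1) → ℝ) := NN u um '' Set.Ici (-y)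

lemma Dset_nonempty (hy : 0 ≤ y) : (Dset' u um y).Nonempty :=
  ⟨NN u um 0, 0, by simpa using hy, rfl⟩

lemma isCompact_Dset (hy : 0 ≤ y) (hupos : ∀ i, 0 < u i) (hub : ∀ i, u i ≤ um) :
    IsCompact (Dset' u um y) := by
  apply Metric.isCompact_of_isClosed_isBounded
  · -- closedness
    apply isClosed_of_closure_subset
    intro x hx
    obtain ⟨v, hv, hvx⟩ := mem_closure_iff_seq_limit.1 hx
    choose ξs hξs hNξ using hv
    by_cases hA : ∃ A : ℝ, {n : ℕ | ξs n ≤ A}.Infinite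
    · obtain ⟨A, hAinf⟩ := hA
      set φ := Nat.nth (fun n => ξs n ≤ A) with hφ
      have hφmono : StrictMono φ := Nat.nth_strictMono hAinf
      have hφmem : ∀ n, ξs (φ n) ≤ A := fun n => Nat.nth_mem_of_infinite hAinf n
      have hmem : ∀ n, ξs (φ n) ∈ Set.Icc (-y) A := fun n => ⟨hξs _, hφmem n⟩
      obtain ⟨ξstar, hξstar, ψ, hψmono, hψlim⟩ :=
        (isCompact_Icc (a := -y) (b := A)).tendsto_subseq hmem
      have h1 : Filter.Tendsto (fun n => NN u um (ξs (φ (ψ n)))) Filter.atTop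
          (nhds (NN u um ξstar)) := (continuous_NN.tendsto _).comp hψlim
      have h2 : Filter.Tendsto (fun n => NN u um (ξs (φ (ψ n)))) Filter.atTop (nhds x) := by
        have : Filter.Tendsto (fun n => v (φ (ψ n))) Filter.atTop (nhds x) :=
          hvx.comp ((hφmono.comp hψmono).tendsto_atTop)
        exact Filter.Tendsto.congr (fun n => (hNξ _).symm) this
      have : x = NN u um ξstar := tendsto_nhds_unique h2 h1
      exact ⟨ξstar, hξstar.1, this.symm⟩
    · push_neg at hA
      have hto : Filter.Tendsto ξs Filter.atTop Filter.atTop := by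
        rw [Filter.tendsto_atTop]
        intro b
        have : {n : ℕ | ¬ b ≤ ξs n}.Finite :=
          Set.Finite.subset (hA b) (fun n hn => le_of_not_ge hn)
        rw [← Nat.cofinite_eq_atTop, Filter.eventually_cofinite]
        exact this
      have h1 : Filter.Tendsto (fun n => NN u um (ξs n)) Filter.atTop
          (nhds (NN u um 0)) := (tendsto_NN_atTop hupos hub).comp hto
      have h2 : Filter.Tendsto (fun n => NN u um (ξs n)) Filter.atTop (nhds x) :=
        Filter.Tendsto.congr (fun n => (hNξ _).symm) hvx
      have : x = NN u um 0 := tendsto_nhds_unique h2 h1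
      exact ⟨0, by simpa using hy, this.symm⟩
  · -- boundedness
    apply Bornology.IsBounded.subset (Metric.isBounded_closedBall (x := (0 : Fin (m+1) → ℝ)) (r := 1))
    rintro x ⟨ξ, -, rfl⟩
    rw [Metric.mem_closedBall, dist_zero_right]
    exact norm_NN_le hupos hub ξ

/-- All of the convex hull of `Dset` lies in `Cset`. -/
lemma convexHull_Dset_subset : convexHull ℝ (Dset' u um y) ⊆ Cset (u := u) (um := um) (y := y) :=
  convexHull_min (by rintro x ⟨ξ, hξ, rfl⟩; exact NN_mem_Cset hξ) (convex_Cset u um y)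

lemma hull_last_eq_one : ∀ w ∈ convexHull ℝ (Dset' u um y), w (Fin.last m) = 1 := by
  have : convexHull ℝ (Dset' u um y) ⊆ {w : Fin (m+1) → ℝ | w (Fin.last m) = 1} := by
    apply convexHull_min
    · rintro x ⟨ξ, hξ, rfl⟩
      exact NN_last ξ
    · exact convex_hyperplane
        ⟨fun a b => by simp, fun r a => by simp⟩ 1
  exact fun w hw => this hw

/-- Conic representation of `Cset` over the convex hull of `Dset`. -/
lemma Cset_eq (hy : 0 ≤ y) :
    Cset (u := u) (um := um) (y := y)
      = {x | ∃ t : ℝ, 0 ≤ t ∧ ∃ w ∈ convexHull ℝ (Dset' u um y), x = t • w} := by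
  apply Set.Subset.antisymm
  · rintro x ⟨k, c, ξ, hc, hξ, rfl⟩
    set x := ∑ j : Fin k, c j • fun i => g m u um i (ξ j) with hxdef
    set T := ∑ j : Fin k, c j * gl um (ξ j) with hT
    have hTnn : 0 ≤ T := Finset.sum_nonneg fun j _ => mul_nonneg (hc j) (gl_pos _).le
    rcases eq_or_lt_of_le hTnn with hT0 | hTpos
    · -- all coefficients vanish
      have hz : ∀ j ∈ Finset.univ, c j * gl um (ξ j) = 0 := by
        intro j _
        have := (Finset.sum_eq_zero_iff_of_nonneg
          (fun j _ => mul_nonneg (hc j) (gl_pos (um := um) (ξ j)).le)).1 hT0.symm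
        exact this j (Finset.mem_univ j)
      have hc0 : ∀ j, c j = 0 := by
        intro j
        have := hz j (Finset.mem_univ j)
        rcases mul_eq_zero.1 this with h | h
        · exact h
        · exact absurd h (gl_pos _).ne'
      refine ⟨0, le_rfl, NN u um 0, subset_convexHull ℝ _ ⟨0, by simpa using hy, rfl⟩, ?_⟩
      rw [hxdef]
      simp [hc0]
    · refine ⟨T, hTnn, T⁻¹ • x, ?_, (smul_inv_smul₀ hTpos.ne' x).symm⟩
      have hrepr : T⁻¹ • x = ∑ j : Fin k, ((c j * gl um (ξ j)) / T) • NN u um (ξ j) := by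
        rw [hxdef, Finset.smul_sum]
        apply Finset.sum_congr rfl
        intro j _
        rw [NN, smul_smul, smul_smul]
        congr 1
        have hgl : gl um (ξ j) ≠ 0 := (gl_pos _).ne'
        field_simp
      rw [hrepr]
      apply Convex.sum_mem (convex_convexHull ℝ _)
      · exact fun j _ => div_nonneg (mul_nonneg (hc j) (gl_pos _).le) hTnn
      · rw [← Finset.sum_div, ← hT, div_self hTpos.ne']
      · exact fun j _ => subset_convexHull ℝ _ ⟨ξ j, hξ j, rfl⟩
  · rintro x ⟨t, ht, w, hw, rfl⟩
    exact smul_mem_Cset u um y ht (convexHull_Dset_subset hw)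

/-- `Cset` is closed. -/
lemma isClosed_Cset (hy : 0 ≤ y) (hupos : ∀ i, 0 < u i) (hub : ∀ i, u i ≤ um) :
    IsClosed (Cset (u := u) (um := um) (y := y)) := by
  apply isClosed_of_closure_subset
  intro x hx
  set R := x (Fin.last m) + 1 with hR
  set V : Set (Fin (m+1) → ℝ) := {z | z (Fin.last m) < R} with hV
  have hVopen : IsOpen V := isOpen_lt (continuous_apply _) continuous_const
  have hxV : x ∈ V := by
    show x (Fin.last m) < R
    rw [hR]; linarith
  have hxCV : x ∈ closure (Cset (u := u) (um := um) (y := y) ∩ V) := by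
    rw [mem_closure_iff_nhds]
    intro t ht
    obtain ⟨z, hz⟩ := mem_closure_iff_nhds.1 hx (t ∩ V)
      (Filter.inter_mem ht (hVopen.mem_nhds hxV))
    exact ⟨z, hz.1.1, hz.2, hz.1.2⟩
  set E := convexHull ℝ (Dset' u um y) with hE
  have hEcomp : IsCompact E :=
    isCompact_convexHull_fin (Dset_nonempty hy) (isCompact_Dset hy hupos hub)
  set S := (fun q : ℝ × (Fin (m+1) → ℝ) => q.1 • q.2) '' (Set.Icc (0:ℝ) R ×ˢ E) with hS
  have hScomp : IsCompact S :=
    (isCompact_Icc.prod hEcomp).image (continuous_fst.smul continuous_snd)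
  have hsub : Cset (u := u) (um := um) (y := y) ∩ V ⊆ S := by
    rintro z ⟨hzC, hzV⟩
    rw [Cset_eq hy] at hzC
    obtain ⟨t, ht, w, hw, rfl⟩ := hzC
    have hwlast : w (Fin.last m) = 1 := hull_last_eq_one w hw
    have htR : t < R := by
      have : (t • w) (Fin.last m) = t := by simp [hwlast]
      rw [← this]; exact hzV
    exact ⟨⟨t, w⟩, ⟨⟨ht, htR.le⟩, hw⟩, rfl⟩
  have hxS : x ∈ S := hScomp.isClosed.closure_subset ((closure_mono hsub) hxCV)
  obtain ⟨⟨t, w⟩, ⟨⟨ht0, -⟩, hw⟩, rfl⟩ := hxS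
  rw [Cset_eq hy]
  exact ⟨t, ht0, w, hw, rfl⟩


/-- Forward direction: a representing measure puts the moment vector in the
closed conic hull, by Hahn–Banach separation. -/
lemma mem_closure_Cset_of_measure {p : Fin (m + 1) → ℝ} (K : Measure ℝ)
    (hnull : K (Set.Iio (-y)) = 0)
    (hint : ∀ i : Fin (m + 1), Integrable (g m u um i) K)
    (hmom : ∀ i : Fin (m + 1), ∫ ξ, g m u um i ξ ∂K = p i) :
    p ∈ closure (Cset (u := u) (um := um) (y := y)) := by
  by_contra hp
  have hCC : Convex ℝ (closure (Cset (u := u) (um := um) (y := y))) :=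
    (convex_Cset u um y).closure
  obtain ⟨f, s, hfp, hfs⟩ := geometric_hahn_banach_point_closed hCC isClosed_closure hp
  have hs0 : s < 0 := by
    have := hfs 0 (subset_closure (zero_mem_Cset u um y))
    simpa using this
  have hfG : ∀ ξ₀ : ℝ, -y ≤ ξ₀ → 0 ≤ f (G u um ξ₀) := by
    intro ξ₀ hξ₀
    by_contra hneg
    push_neg at hneg
    set q := s / f (G u um ξ₀) with hq
    have hqpos : 0 < q := div_pos_of_neg_of_neg hs0 hneg
    have hmem : q • G u um ξ₀ ∈ closure (Cset (u := u) (um := um) (y := y)) :=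
      subset_closure (smul_mem_Cset u um y hqpos.le (G_mem_Cset u um y hξ₀))
    have h1 := hfs _ hmem
    rw [_root_.map_smul, smul_eq_mul, hq, div_mul_cancel₀ s hneg.ne] at h1
    exact lt_irrefl s h1
  set a : Fin (m + 1) → ℝ := fun i => f (fun j => if i = j then 1 else 0) with ha
  have hrep : ∀ x : Fin (m + 1) → ℝ, f x = ∑ i, x i * a i := by
    intro x
    conv_lhs => rw [pi_eq_sum_univ x]
    rw [map_sum]
    exact Finset.sum_congr rfl fun i _ => by rw [_root_.map_smul, smul_eq_mul]
  have hfp_int : f p = ∫ ξ, (∑ i, g m u um i ξ * a i) ∂K := by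
    rw [hrep p,
      integral_finset_sum _ (fun i _ => (hint i).mul_const (a i))]
    refine Finset.sum_congr rfl fun i _ => ?_
    rw [integral_mul_const, hmom i]
  have hnonneg : 0 ≤ f p := by
    rw [hfp_int]
    apply integral_nonneg_of_ae
    rw [Filter.EventuallyLE, ae_iff]
    apply measure_mono_null _ hnull
    intro ξ hξ
    simp only [Set.mem_setOf_eq] at hξ
    rw [Set.mem_Iio]
    by_contra hge
    push_neg at hge
    apply hξ
    show (0:ℝ) ≤ ∑ i, g m u um i ξ * a i
    have := hfG ξ (by linarith)
    rwa [hrep (G u um ξ)] at this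
  linarith [hfs, hfp]

/-- Backward direction: a point of the conic hull is realized by an atomic measure. -/
lemma exists_measure_of_mem_Cset {p : Fin (m + 1) → ℝ}
    (hmem : p ∈ Cset (u := u) (um := um) (y := y)) :
    ∃ K : Measure ℝ,
      K (Set.Iio (-y)) = 0 ∧
      (∀ i : Fin (m + 1), Integrable (g m u um i) K) ∧
      (∀ i : Fin (m + 1), ∫ ξ, g m u um i ξ ∂K = p i) := by
  obtain ⟨k, c, ξs, hc, hξ, hp⟩ := hmem
  set K : Measure ℝ := ∑ j : Fin k, ENNReal.ofReal (c j) • Measure.dirac (ξs j) with hK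
  have hintj : ∀ (i : Fin (m + 1)) (j : Fin k),
      Integrable (g m u um i) (ENNReal.ofReal (c j) • Measure.dirac (ξs j)) := by
    intro i j
    refine Integrable.smul_measure ?_ ENNReal.ofReal_ne_top
    exact (integrable_const (g m u um i (ξs j))).congr (ae_eq_dirac (g m u um i)).symm
  refine ⟨K, ?_, ?_, ?_⟩
  · rw [hK, Measure.finset_sum_apply]
    apply Finset.sum_eq_zero
    intro j _
    rw [Measure.smul_apply, Measure.dirac_apply' _ measurableSet_Iio,
      Set.indicator_of_notMem (by simpa using not_lt.2 (hξ j)), smul_zero]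
  · intro i
    rw [hK, integrable_finset_sum_measure]
    exact fun j _ => hintj i j
  · intro i
    rw [hK, integral_finset_sum_measure (fun j _ => hintj i j)]
    have : ∀ j : Fin k, ∫ ξ, g m u um i ξ ∂(ENNReal.ofReal (c j) • Measure.dirac (ξs j))
        = c j * g m u um i (ξs j) := by
      intro j
      rw [integral_smul_measure, integral_dirac, ENNReal.toReal_ofReal (hc j), smul_eq_mul]
    rw [Finset.sum_congr rfl fun j _ => this j]
    have := congrFun hp i
    rw [this, Finset.sum_apply]
    exact Finset.sum_congr rfl fun j _ => by simp

end Main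

/-- Krein–Nudelman generalized moment problem. -/
theorem generalized_moment_problem_solvable_iff
    (m : ℕ) (hm : 0 < m) (u : Fin m → ℝ)
    (hupos : ∀ i, 0 < u i) (humono : StrictMono u)
    (y : ℝ) (hy : 0 ≤ y) (p : Fin (m + 1) → ℝ) :
    (∃ K : Measure ℝ,
        K (Set.Iio (-y)) = 0 ∧
        (∀ i : Fin (m + 1),
          Integrable (g m u (u ⟨m - 1, by omega⟩) i) K) ∧
        (∀ i : Fin (m + 1),
          ∫ ξ, g m u (u ⟨m - 1, by omega⟩) i ξ ∂K = p i))
      ↔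
    p ∈ closure {x : Fin (m + 1) → ℝ |
        ∃ (k : ℕ) (c : Fin k → ℝ) (ξ : Fin k → ℝ),
          (∀ j, 0 ≤ c j) ∧ (∀ j, -y ≤ ξ j) ∧
          x = ∑ j : Fin k, c j • fun i => g m u (u ⟨m - 1, by omega⟩) i (ξ j)} := by
  set um := u ⟨m - 1, by omega⟩ with hum
  have hub : ∀ i, u i ≤ um := by
    intro i
    apply humono.monotone
    have : (i : ℕ) < m := i.isLt
    show (i : ℕ) ≤ m - 1
    omega
  have hsets : {x : Fin (m + 1) → ℝ |
        ∃ (k : ℕ) (c : Fin k → ℝ) (ξ : Fin k → ℝ),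
          (∀ j, 0 ≤ c j) ∧ (∀ j, -y ≤ ξ j) ∧
          x = ∑ j : Fin k, c j • fun i => g m u um i (ξ j)}
      = Cset (u := u) (um := um) (y := y) := rfl
  rw [hsets]
  constructor
  · rintro ⟨K, hnull, hint, hmom⟩
    exact mem_closure_Cset_of_measure K hnull hint hmom
  · intro hp
    have hC : p ∈ Cset (u := u) (um := um) (y := y) :=
      (isClosed_Cset hy hupos hub).closure_subset hp
    exact exists_measure_of_mem_Cset hC

end Stmt12
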